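/- arXiv:1701.03423 — 7 statements merged into one kernel-verified Lean document; each statement's English description precedes it below -/
import Mathlib

section
/- Let G be a finite group and let C₁, C₂ be subgroups of G. Let A₁ and A₂ be the Cayley adjacency matrices of Cay(G, C₁∖{id}) and Cay(G, C₂∖{id}) respectively (as G×G matrices over ℂ). Then A₁·A₂ = A₂·A₁ if and only if C₁·C₂ = C₂·C₁ as subsets of G (elementwise product of sets). -/
open scoped Pointwise Classical

/-- The Cayley adjacency matrix of `Cay(G, S \ {id})`: entry `(g, h)` is `1` if
`g * h⁻¹ ∈ S` and `g ≠ h`, and `0` otherwise. -/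
noncomputable def cayleyAdj {G : Type*} [Group G] (S : Subgroup G) : Matrix G G ℂ :=
  Matrix.of fun g h => if g * h⁻¹ ∈ S ∧ g ≠ h then (1 : ℂ) else 0

noncomputable def grpMat {G : Type*} [Group G] (S : Subgroup G) : Matrix G G ℂ :=
  Matrix.of fun g h => if g * h⁻¹ ∈ S then (1 : ℂ) else 0

lemma cayleyAdj_eq {G : Type*} [Group G] [Fintype G] (S : Subgroup G) :
    cayleyAdj S = grpMat S - 1 := by
  ext g h
  simp only [cayleyAdj, grpMat, Matrix.sub_apply, Matrix.one_apply, Matrix.of_apply]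
  by_cases hgh : g = h
  · subst hgh; simp [S.one_mem]
  · simp [hgh]

lemma grpMat_mul_apply {G : Type*} [Group G] [Fintype G] (C₁ C₂ : Subgroup G) (g h : G) :
    (grpMat C₁ * grpMat C₂) g h =
      if g * h⁻¹ ∈ (C₁ : Set G) * (C₂ : Set G)
      then (Fintype.card ↥(C₁ ⊓ C₂) : ℂ) else 0 := by
  classical
  rw [Matrix.mul_apply]
  have hterm : ∀ k : G, (grpMat C₁ g k) * (grpMat C₂ k h) =
      if (g * k⁻¹ ∈ C₁ ∧ k * h⁻¹ ∈ C₂) then (1 : ℂ) else 0 := by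
    intro k
    simp only [grpMat, Matrix.of_apply]
    by_cases h1 : g * k⁻¹ ∈ C₁ <;> by_cases h2 : k * h⁻¹ ∈ C₂ <;> simp [h1, h2]
  rw [Finset.sum_congr rfl fun k _ => hterm k]
  rw [Finset.sum_boole]
  by_cases hm : g * h⁻¹ ∈ (C₁ : Set G) * (C₂ : Set G)
  · rw [if_pos hm]
    obtain ⟨c₁, hc₁, c₂, hc₂, hcc⟩ := hm
    set k₀ : G := c₁⁻¹ * g with hk₀
    have hgk₀ : g * k₀⁻¹ ∈ C₁ := by
      simp only [hk₀, mul_inv_rev, inv_inv]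
      simpa using hc₁
    have hk₀h : k₀ * h⁻¹ ∈ C₂ := by
      have : k₀ * h⁻¹ = c₂ := by
        rw [hk₀]
        rw [mul_assoc]
        rw [← hcc] at *
        group
      rw [this]; exact hc₂
    have hcard : (Finset.univ.filter (fun k => g * k⁻¹ ∈ C₁ ∧ k * h⁻¹ ∈ C₂)).card =
        Fintype.card ↥(C₁ ⊓ C₂) := by
      rw [Fintype.card_subtype]
      apply Finset.card_bij' (fun k _ => k * k₀⁻¹) (fun m _ => m * k₀)
      · intro k hk
        simp only [Finset.mem_filter, Finset.mem_univ, true_and] at hk ⊢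
        obtain ⟨h1, h2⟩ := hk
        refine ⟨?_, ?_⟩
        · have := C₁.mul_mem ((C₁.inv_mem h1)) hgk₀
          simpa [mul_assoc] using this
        · have := C₂.mul_mem h2 (C₂.inv_mem hk₀h)
          have he : (k * h⁻¹) * (k₀ * h⁻¹)⁻¹ = k * k₀⁻¹ := by group
          rwa [he] at this
      · intro m hm'
        simp only [Finset.mem_filter, Finset.mem_univ, true_and, Subgroup.mem_inf] at hm' ⊢
        obtain ⟨h1, h2⟩ := hm'
        refine ⟨?_, ?_⟩
        · have := C₁.mul_mem hgk₀ (C₁.inv_mem h1)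
          have he : (g * k₀⁻¹) * m⁻¹ = g * (m * k₀)⁻¹ := by group
          rwa [he] at this
        · have := C₂.mul_mem h2 hk₀h
          have he : m * (k₀ * h⁻¹) = (m * k₀) * h⁻¹ := by group
          rwa [he] at this
      · intro k _; group
      · intro m _; group
    rw [hcard]
  · rw [if_neg hm]
    have : (Finset.univ.filter (fun k => g * k⁻¹ ∈ C₁ ∧ k * h⁻¹ ∈ C₂)) = ∅ := by
      ext k
      simp only [Finset.mem_filter, Finset.mem_univ, true_and, Finset.notMem_empty,
        iff_false]
      rintro ⟨h1, h2⟩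
      apply hm
      refine ⟨g * k⁻¹, h1, k * h⁻¹, h2, by group⟩
    rw [this]
    simp

lemma grpMat_comm_iff {G : Type*} [Group G] [Fintype G] (C₁ C₂ : Subgroup G) :
    grpMat C₁ * grpMat C₂ = grpMat C₂ * grpMat C₁ ↔
      (C₁ : Set G) * (C₂ : Set G) = (C₂ : Set G) * (C₁ : Set G) := by
  have hcard : (Fintype.card ↥(C₂ ⊓ C₁) : ℂ) = (Fintype.card ↥(C₁ ⊓ C₂) : ℂ) := by
    rw [inf_comm]
  have hne : (Fintype.card ↥(C₁ ⊓ C₂) : ℂ) ≠ 0 := by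
    have : (0:ℕ) < Fintype.card ↥(C₁ ⊓ C₂) := Fintype.card_pos
    exact_mod_cast this.ne'
  constructor
  · intro h
    ext x
    have hx := congrFun (congrFun h x) 1
    rw [grpMat_mul_apply, grpMat_mul_apply, hcard] at hx
    simp only [inv_one, mul_one] at hx
    constructor
    · intro hx1
      by_contra hx2
      rw [if_pos hx1, if_neg hx2] at hx
      exact hne hx
    · intro hx1
      by_contra hx2
      rw [if_neg hx2, if_pos hx1] at hx
      exact hne hx.symm
  · intro h
    ext g k
    rw [grpMat_mul_apply, grpMat_mul_apply, hcard]
    simp only [h]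

theorem cayley_commute_iff_subgroup_products_eq
    {G : Type*} [Group G] [Fintype G] (C₁ C₂ : Subgroup G) :
    cayleyAdj C₁ * cayleyAdj C₂ = cayleyAdj C₂ * cayleyAdj C₁ ↔
      (C₁ : Set G) * (C₂ : Set G) = (C₂ : Set G) * (C₁ : Set G) := by
  rw [cayleyAdj_eq, cayleyAdj_eq, ← grpMat_comm_iff]
  constructor
  · intro h
    have h' : Commute (grpMat C₁ - 1) (grpMat C₂ - 1) := h
    have := (h'.add_right (Commute.one_right _)).add_left (Commute.one_left _)
    simpa [sub_add_cancel] using this.eq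
  · intro h
    have h' : Commute (grpMat C₁) (grpMat C₂) := h
    exact Commute.sub_left (h'.sub_right (Commute.one_right _)) (Commute.one_left _)
end

section
/- Let n, k be positive natural numbers, let A₁, …, A_k be pairwise commuting n×n complex matrices, let γ₁, …, γ_k be positive real numbers, let θ be a real number, and let T be a natural number. For each i define H_i = (2/γ_i)·A_i + ((2 − γ_i)/γ_i)·I. Then (∏_{i=1}^k exp(i·θ·γ_i·H_i))^T = exp(i·θ·T·(2k − ∑_{i=1}^k γ_i)) · exp(2·i·θ·T·∑_{i=1}^k A_i), where exp denotes the matrix exponential and i is the imaginary unit. -/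
open Complex

private lemma exp_ofFn_prod {n : ℕ} : ∀ {k : ℕ} (f : Fin k → Matrix (Fin n) (Fin n) ℂ),
    (∀ i j, Commute (f i) (f j)) →
    (List.ofFn fun i => NormedSpace.exp (f i)).prod = NormedSpace.exp (∑ i, f i) := by
  intro k
  induction k with
  | zero =>
      intro f _
      simp [NormedSpace.exp_zero]
  | succ m ih =>
      intro f hf
      rw [List.ofFn_succ, List.prod_cons, Fin.sum_univ_succ,
        Matrix.exp_add_of_commute _ _ (Commute.sum_right _ _ _ fun i _ => hf 0 i.succ),
        ih (fun i => f i.succ) (fun i j => hf i.succ j.succ)]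

private lemma exp_smul_one_mat {n : ℕ} (c : ℂ) :
    NormedSpace.exp (c • (1 : Matrix (Fin n) (Fin n) ℂ)) =
      Complex.exp c • (1 : Matrix (Fin n) (Fin n) ℂ) := by
  rw [Matrix.smul_one_eq_diagonal, Matrix.smul_one_eq_diagonal, Matrix.exp_diagonal]
  have : NormedSpace.exp (fun _ : Fin n => c) = fun _ => Complex.exp c := by
    funext i
    rw [Pi.coe_exp, Complex.exp_eq_exp_ℂ]
  rw [this]

theorem staggered_discretizes_continuous_walk
    (n k : ℕ) (hn : 0 < n) (hk : 0 < k)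
    (A : Fin k → Matrix (Fin n) (Fin n) ℂ)
    (hcomm : ∀ i j, Commute (A i) (A j))
    (γ : Fin k → ℝ) (hγ : ∀ i, 0 < γ i)
    (θ : ℝ) (T : ℕ)
    (H : Fin k → Matrix (Fin n) (Fin n) ℂ)
    (hH : ∀ i, H i = ((2 : ℂ) / (γ i : ℂ)) • A i
        + (((2 : ℂ) - (γ i : ℂ)) / (γ i : ℂ)) • (1 : Matrix (Fin n) (Fin n) ℂ)) :
    (List.ofFn fun i =>
        NormedSpace.exp ((Complex.I * (θ : ℂ) * (γ i : ℂ)) • H i)).prod ^ T =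
      Complex.exp (Complex.I * (θ : ℂ) * (T : ℂ) * (2 * (k : ℂ) - ∑ i, (γ i : ℂ))) •
        NormedSpace.exp ((2 * Complex.I * (θ : ℂ) * (T : ℂ)) • ∑ i, A i) := by
  have hγc : ∀ i, (γ i : ℂ) ≠ 0 := fun i => by
    exact_mod_cast (hγ i).ne'
  -- rewrite each term
  have hterm : ∀ i, (Complex.I * (θ : ℂ) * (γ i : ℂ)) • H i
      = (2 * Complex.I * (θ : ℂ)) • A i
        + (Complex.I * (θ : ℂ) * (2 - (γ i : ℂ))) • (1 : Matrix (Fin n) (Fin n) ℂ) := by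
    intro i
    rw [hH i, smul_add, smul_smul, smul_smul]
    congr 2
    · field_simp [hγc i]
    · field_simp [hγc i]
  have hcomm' : ∀ i j, Commute
      ((Complex.I * (θ : ℂ) * (γ i : ℂ)) • H i)
      ((Complex.I * (θ : ℂ) * (γ j : ℂ)) • H j) := by
    intro i j
    rw [hterm i, hterm j]
    exact (((hcomm i j).smul_left _).smul_right _).add_left
        ((Commute.one_left _).smul_left _ |>.smul_right _)
      |>.add_right
      ((((Commute.one_right _).smul_left _).smul_right _).add_left
        (((Commute.one_left _).smul_left _).smul_right _))
  rw [exp_ofFn_prod _ hcomm', ← Matrix.exp_nsmul]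
  have hsum : T • ∑ i, (Complex.I * (θ : ℂ) * (γ i : ℂ)) • H i
      = (Complex.I * (θ : ℂ) * (T : ℂ) * (2 * (k : ℂ) - ∑ i, (γ i : ℂ)))
          • (1 : Matrix (Fin n) (Fin n) ℂ)
        + (2 * Complex.I * (θ : ℂ) * (T : ℂ)) • ∑ i, A i := by
    have : ∑ i, (Complex.I * (θ : ℂ) * (γ i : ℂ)) • H i
        = (2 * Complex.I * (θ : ℂ)) • ∑ i, A i
          + (Complex.I * (θ : ℂ) * (2 * (k : ℂ) - ∑ i, (γ i : ℂ)))
            • (1 : Matrix (Fin n) (Fin n) ℂ) := by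
      simp_rw [hterm, Finset.sum_add_distrib, ← Finset.smul_sum, ← Finset.sum_smul]
      congr 2
      simp_rw [mul_sub, Finset.sum_sub_distrib, Finset.sum_const, Finset.card_univ,
        Fintype.card_fin, ← Finset.mul_sum, nsmul_eq_mul]
      ring
    rw [this, ← Nat.cast_smul_eq_nsmul ℂ, smul_add, smul_smul, smul_smul, add_comm]
    congr 2
    · ring
    · ring
  rw [hsum, Matrix.exp_add_of_commute _ _
      (((Commute.one_left _).smul_left _).smul_right _),
    exp_smul_one_mat, smul_mul_assoc, one_mul]
end

section
/- Let G be a finite abelian group, let k be a positive natural number, and let S₁, …, S_k be subgroups of G with γ_i = |S_i|. Suppose S₁ = {id, s} for an element s ∈ G with s ≠ id and s·s = id. Let T be a positive natural number and set θ₁ = π/(2T) and θ_i = π·γ_i/T for i ≥ 2. For each i let A_i be the Cayley adjacency matrix of Cay(G, S_i∖{id}) over ℂ and let H_i = (2/γ_i)·A_i + ((2 − γ_i)/γ_i)·I, and define U = ∏_{i=1}^k exp(i·θ_i·H_i) (matrix exponential, i the imaginary unit). Then there exists α ∈ ℂ with |α| = 1 such that U^T = α·A₁; in particular, since (A₁)_{g,h}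 = 1 exactly when g = s·h, the walk U exhibits perfect state transfer between every pair of vertices h and s·h at time T. -/
open scoped Classical

section Helpers

variable {G : Type*} [CommGroup G] [Fintype G]

/-- Indicator matrix of the whole subgroup (including the identity). -/
noncomputable def bmat (S : Subgroup G) : Matrix G G ℂ :=
  Matrix.of fun g h => if g * h⁻¹ ∈ S then (1 : ℂ) else 0

lemma bmat_mul_comm (S S' : Subgroup G) : bmat S * bmat S' = bmat S' * bmat S := by
  ext g h
  simp only [Matrix.mul_apply, bmat, Matrix.of_apply]
  refine Fintype.sum_equiv ((Equiv.inv G).trans (Equiv.mulLeft (g * h))) _ _ ?_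
  intro x
  have h1 : g * (g * h * x⁻¹)⁻¹ = x * h⁻¹ := by
    rw [mul_inv_rev, mul_inv_rev, inv_inv, mul_left_comm, mul_comm h⁻¹, mul_inv_cancel_left]
  have h2 : (g * h * x⁻¹) * h⁻¹ = g * x⁻¹ := by
    rw [mul_right_comm, mul_inv_cancel_right]
  simp only [Equiv.trans_apply, Equiv.inv_apply, Equiv.coe_mulLeft, h1, h2]
  ring

lemma card_filter_aux (S : Subgroup G) (g : G) :
    (Finset.univ.filter fun x => g * x⁻¹ ∈ S).card = Nat.card S := by
  rw [Nat.card_eq_fintype_card, ← Fintype.card_subtype]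
  refine Fintype.card_congr ?_
  refine { toFun := fun x => ⟨g * (x : G)⁻¹, x.2⟩,
           invFun := fun t => ⟨(t : G)⁻¹ * g, ?_⟩, left_inv := ?_, right_inv := ?_ }
  · have : g * ((t : G)⁻¹ * g)⁻¹ = (t : G) := by
      simp [mul_inv_rev, mul_comm, mul_left_comm, mul_assoc]
    rw [this]; exact t.2
  · intro x; ext
    simp [mul_inv_rev, mul_comm, mul_left_comm, mul_assoc]
  · intro t; ext
    simp [mul_inv_rev, mul_comm, mul_left_comm, mul_assoc]

lemma bmat_sq (S : Subgroup G) : bmat S * bmat S = ((Nat.card S : ℂ)) • bmat S := by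
  ext g h
  simp only [Matrix.mul_apply, Matrix.smul_apply, bmat, Matrix.of_apply, smul_eq_mul]
  by_cases hgh : g * h⁻¹ ∈ S
  · rw [if_pos hgh, mul_one]
    have key : ∀ x : G, (if g * x⁻¹ ∈ S then (1:ℂ) else 0) * (if x * h⁻¹ ∈ S then (1:ℂ) else 0)
        = if g * x⁻¹ ∈ S then (1:ℂ) else 0 := by
      intro x
      by_cases hx : g * x⁻¹ ∈ S
      · rw [if_pos hx, one_mul, if_pos]
        have hxh : x * h⁻¹ = (g * x⁻¹)⁻¹ * (g * h⁻¹) := by group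
        rw [hxh]; exact S.mul_mem (S.inv_mem hx) hgh
      · rw [if_neg hx, zero_mul]
    rw [Finset.sum_congr rfl fun x _ => key x, Finset.sum_boole, card_filter_aux]
  · rw [if_neg hgh, mul_zero]
    refine Finset.sum_eq_zero fun x _ => ?_
    by_cases hx : g * x⁻¹ ∈ S
    · by_cases hx2 : x * h⁻¹ ∈ S
      · exact absurd (by
          have hd : g * h⁻¹ = (g * x⁻¹) * (x * h⁻¹) := by group
          rw [hd]; exact S.mul_mem hx hx2) hgh
      · rw [if_neg hx2, mul_zero]
    · rw [if_neg hx, zero_mul]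

omit [Fintype G] in
lemma cayley_eq_bmat (S : Subgroup G) : cayleyAdj S = bmat S - 1 := by
  ext g h
  simp only [cayleyAdj, bmat, Matrix.sub_apply, Matrix.of_apply, Matrix.one_apply]
  by_cases hgh : g = h
  · subst hgh
    simp [S.one_mem]
  · simp [hgh]

end Helpers

section Alg

variable {G : Type*} [Fintype G]

lemma comm_aux (X Y : Matrix G G ℂ) (hc : X * Y = Y * X) (a b c d : ℂ) :
    (a • X + b • 1) * (c • Y + d • 1) = (c • Y + d • 1) * (a • X + b • 1) := by
  simp only [mul_add, add_mul, smul_mul_assoc, mul_smul_comm, mul_one, one_mul, smul_smul, hc]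
  module

lemma comm_aux' (X Y : Matrix G G ℂ) (hc : X * Y = Y * X) (a b c d : ℂ) :
    (a • 1 + b • X) * (c • 1 + d • Y) = (c • 1 + d • Y) * (a • 1 + b • X) := by
  simp only [mul_add, add_mul, smul_mul_assoc, mul_smul_comm, mul_one, one_mul, smul_smul, hc]
  module

lemma refl_sq (B : Matrix G G ℂ) (c : ℂ) (hc : c ≠ 0) (hB : B * B = c • B) :
    (((2:ℂ)/c) • B + (-1 : ℂ) • 1) * (((2:ℂ)/c) • B + (-1:ℂ) • 1) = 1 := by
  conv_rhs => rw [← one_smul ℂ (1 : Matrix G G ℂ)]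
  simp only [mul_add, add_mul, smul_mul_assoc, mul_smul_comm, mul_one, one_mul, smul_smul, hB]
  match_scalars
  all_goals (field_simp; try norm_num)

lemma mul_expand (X : Matrix G G ℂ) (hX : X * X = 1) (a b c d : ℂ) :
    (a • (1 : Matrix G G ℂ) + b • X) * (c • 1 + d • X)
      = (a * c + b * d) • 1 + (a * d + b * c) • X := by
  simp only [mul_add, add_mul, smul_mul_assoc, mul_smul_comm, mul_one, one_mul, smul_smul, hX]
  module

lemma exp_invol (M : Matrix G G ℂ) (hM : M * M = 1) (t : ℝ) :
    NormedSpace.exp ((Complex.I * (t : ℂ)) • M)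
      = ((Real.cos t : ℂ)) • (1 : Matrix G G ℂ) + (Complex.I * (Real.sin t : ℂ)) • M := by
  have hM2 : M ^ 2 = 1 := by rw [sq, hM]
  have heven : ∀ n : ℕ, M ^ (2 * n) = 1 := fun n => by rw [pow_mul, hM2, one_pow]
  have key : HasSum (fun n : ℕ => ((Nat.factorial n : ℂ))⁻¹ • ((Complex.I * (t : ℂ)) • M) ^ n)
      (((Real.cos t : ℂ)) • (1 : Matrix G G ℂ) + (Complex.I * (Real.sin t : ℂ)) • M) := by
    refine HasSum.even_add_odd ?_ ?_
    · have hc := (Complex.hasSum_cos (t : ℂ)).smul_const (1 : Matrix G G ℂ)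
      rw [← Complex.ofReal_cos] at hc
      convert hc using 2 with n
      rw [smul_pow, heven, smul_smul]
      congr 1
      rw [pow_mul, mul_pow, Complex.I_sq]
      field_simp
      ring
    · have hs := ((Complex.hasSum_sin (t : ℂ)).mul_left Complex.I).smul_const M
      rw [← Complex.ofReal_sin] at hs
      convert hs using 2 with n
      rw [smul_pow, pow_succ M, heven, one_mul, smul_smul]
      congr 1
      rw [pow_succ, pow_mul, mul_pow, Complex.I_sq]
      field_simp
      ring
  rw [NormedSpace.exp_eq_tsum ℂ]
  exact key.tsum_eq

lemma invol_de_moivre (M : Matrix G G ℂ) (hM : M * M = 1) (a : ℝ) (n : ℕ) :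
    (((Real.cos a : ℂ)) • (1 : Matrix G G ℂ) + (Complex.I * (Real.sin a : ℂ)) • M) ^ n
      = ((Real.cos (n * a) : ℂ)) • 1 + (Complex.I * (Real.sin (n * a) : ℂ)) • M := by
  induction n with
  | zero => simp
  | succ n ih =>
    rw [pow_succ, ih, mul_expand M hM]
    have hna : ((n + 1 : ℕ) : ℝ) * a = n * a + a := by push_cast; ring
    have e1 : (Real.cos (n * a) : ℂ) * (Real.cos a : ℂ)
        + (Complex.I * (Real.sin (n * a) : ℂ)) * (Complex.I * (Real.sin a : ℂ))
        = ((Real.cos ((n + 1 : ℕ) * a) : ℂ)) := by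
      rw [hna, Real.cos_add]
      have : (Complex.I * (Real.sin (n * a) : ℂ)) * (Complex.I * (Real.sin a : ℂ))
          = (Complex.I * Complex.I) * ((Real.sin (n * a) : ℂ) * (Real.sin a : ℂ)) := by ring
      rw [this, Complex.I_mul_I]
      push_cast
      ring
    have e2 : (Real.cos (n * a) : ℂ) * (Complex.I * (Real.sin a : ℂ))
        + (Complex.I * (Real.sin (n * a) : ℂ)) * (Real.cos a : ℂ)
        = Complex.I * ((Real.sin ((n + 1 : ℕ) * a) : ℂ)) := by
      rw [hna, Real.sin_add]
      push_cast
      ring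
    rw [e1, e2]

lemma list_prod_pow {M : Type*} [Monoid M] (l : List M)
    (h : ∀ x ∈ l, ∀ y ∈ l, Commute x y) (n : ℕ) :
    l.prod ^ n = (l.map (· ^ n)).prod := by
  induction l with
  | nil => simp
  | cons a l ih =>
    simp only [List.prod_cons, List.map_cons]
    rw [(Commute.list_prod_right _ _ fun y hy =>
        h a (by simp) y (by simp [hy])).mul_pow,
      ih fun x hx y hy => h x (by simp [hx]) y (by simp [hy])]

lemma list_smul_pow_prod {ι : Type*} (X : Matrix G G ℂ) (l : List ι) (c : ι → ℂ) (e : ι → ℕ) :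
    (l.map fun i => c i • X ^ e i).prod = (l.map c).prod • X ^ (l.map e).sum := by
  induction l with
  | nil => simp
  | cons a l ih =>
    simp only [List.map_cons, List.prod_cons, List.sum_cons, ih]
    rw [smul_mul_assoc, mul_smul_comm, smul_smul, ← pow_add]

end Alg

theorem staggered_cayley_perfect_state_transfer
    {G : Type*} [CommGroup G] [Fintype G]
    (k : ℕ) (hk : 0 < k) (S : Fin k → Subgroup G)
    (γ : Fin k → ℕ) (hγ : ∀ i, γ i = Nat.card (S i))
    (s : G) (hs : s ≠ 1) (hs2 : s * s = 1)
    (hS1 : (S ⟨0, hk⟩ : Set G) = {1, s})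
    (T : ℕ) (hT : 0 < T)
    (θ : Fin k → ℝ)
    (hθ0 : θ ⟨0, hk⟩ = Real.pi / (2 * T))
    (hθ : ∀ i : Fin k, i ≠ ⟨0, hk⟩ → θ i = Real.pi * (γ i : ℝ) / T)
    (A : Fin k → Matrix G G ℂ) (hA : ∀ i, A i = cayleyAdj (S i))
    (H : Fin k → Matrix G G ℂ)
    (hH : ∀ i, H i = ((2 : ℂ) / (γ i : ℂ)) • A i
        + (((2 : ℂ) - (γ i : ℂ)) / (γ i : ℂ)) • (1 : Matrix G G ℂ))
    (U : Matrix G G ℂ)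
    (hU : U = (List.ofFn fun i => NormedSpace.exp ((Complex.I * (θ i : ℂ)) • H i)).prod) :
    (∃ α : ℂ, ‖α‖ = 1 ∧ U ^ T = α • A ⟨0, hk⟩) ∧
      ∀ h : G, ‖(U ^ T) (s * h) h‖ = 1 := by
  set i0 : Fin k := ⟨0, hk⟩ with hi0
  have hTR : (T : ℝ) ≠ 0 := Nat.cast_ne_zero.mpr hT.ne'
  have hγ0 : ∀ i, (γ i : ℂ) ≠ 0 := fun i => by
    rw [hγ i]
    exact_mod_cast (Nat.card_pos (α := (S i))).ne'
  have hB : ∀ i, bmat (S i) * bmat (S i) = (γ i : ℂ) • bmat (S i) := fun i => by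
    rw [bmat_sq, ← hγ i]
  have hHB : ∀ i, H i = ((2 : ℂ)/(γ i : ℂ)) • bmat (S i) + (-1 : ℂ) • 1 := fun i => by
    rw [hH i, hA i, cayley_eq_bmat, smul_sub]
    have hne := hγ0 i
    have hsc : ((2 : ℂ) - (γ i : ℂ)) / (γ i : ℂ) = (2 : ℂ)/(γ i : ℂ) - 1 := by
      field_simp
    rw [hsc]
    module
  have hHsq : ∀ i, H i * H i = 1 := fun i => by
    rw [hHB i]; exact refl_sq _ _ (hγ0 i) (hB i)
  have hHc : ∀ i j, H i * H j = H j * H i := fun i j => by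
    rw [hHB i, hHB j]; exact comm_aux _ _ (bmat_mul_comm _ _) _ _ _ _
  have hE : ∀ i, NormedSpace.exp ((Complex.I * (θ i : ℂ)) • H i)
      = ((Real.cos (θ i) : ℂ)) • (1 : Matrix G G ℂ)
        + (Complex.I * (Real.sin (θ i) : ℂ)) • H i :=
    fun i => exp_invol (H i) (hHsq i) (θ i)
  -- the special subgroup
  have hcard1 : Nat.card (S i0) = 2 := by
    rw [← SetLike.coe_sort_coe, Nat.card_coe_set_eq, hS1]
    exact Set.ncard_pair (Ne.symm hs)
  have hγ1 : γ i0 = 2 := by rw [hγ, hcard1]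
  have hH0 : H i0 = A i0 := by
    rw [hH, hγ1]
    norm_num
  -- angle arithmetic
  have hTθ0 : (T : ℝ) * θ i0 = Real.pi / 2 := by
    rw [hθ0]
    field_simp
  have hTθ : ∀ i, i ≠ i0 → (T : ℝ) * θ i = (γ i : ℝ) * Real.pi := fun i hi => by
    rw [hθ i hi]
    field_simp
  -- each factor to the T-th power
  have hpow : ∀ i : Fin k,
      (((Real.cos (θ i) : ℂ)) • (1 : Matrix G G ℂ)
        + (Complex.I * (Real.sin (θ i) : ℂ)) • H i) ^ T
      = (if i = i0 then Complex.I else ((-1 : ℂ)) ^ (γ i))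
          • (A i0) ^ (if i = i0 then 1 else 0) := by
    intro i
    rw [invol_de_moivre (H i) (hHsq i) (θ i) T]
    by_cases hi : i = i0
    · subst hi
      rw [if_pos rfl, if_pos rfl, hTθ0, Real.cos_pi_div_two, Real.sin_pi_div_two, hH0]
      simp
    · rw [if_neg hi, if_neg hi, hTθ i hi]
      have hcos : Real.cos ((γ i : ℝ) * Real.pi) = (-1 : ℝ) ^ (γ i) := by
        have h' := Real.cos_nat_mul_pi_sub 0 (γ i)
        simpa using h'
      rw [hcos, Real.sin_nat_mul_pi]
      push_cast
      simp
  -- commuting factors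
  have hEcomm : ∀ x ∈ (List.ofFn fun i =>
        ((Real.cos (θ i) : ℂ)) • (1 : Matrix G G ℂ)
          + (Complex.I * (Real.sin (θ i) : ℂ)) • H i),
      ∀ y ∈ (List.ofFn fun i =>
        ((Real.cos (θ i) : ℂ)) • (1 : Matrix G G ℂ)
          + (Complex.I * (Real.sin (θ i) : ℂ)) • H i), Commute x y := by
    intro x hx y hy
    rw [List.mem_ofFn] at hx hy
    obtain ⟨i, rfl⟩ := hx
    obtain ⟨j, rfl⟩ := hy
    exact comm_aux' _ _ (hHc i j) _ _ _ _
  -- compute U ^ T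
  have hUT : U ^ T
      = ((List.ofFn fun i => if i = i0 then Complex.I else ((-1 : ℂ)) ^ (γ i)).prod)
          • (A i0) ^ ((List.ofFn fun i => if i = i0 then 1 else 0).sum) := by
    rw [hU]
    simp only [hE]
    rw [list_prod_pow _ hEcomm T, List.map_ofFn]
    have : ((· ^ T) ∘ fun i =>
        ((Real.cos (θ i) : ℂ)) • (1 : Matrix G G ℂ)
          + (Complex.I * (Real.sin (θ i) : ℂ)) • H i)
        = fun i => (if i = i0 then Complex.I else ((-1 : ℂ)) ^ (γ i))
            • (A i0) ^ (if i = i0 then 1 else 0) := by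
      funext i
      exact hpow i
    rw [this, List.ofFn_eq_map,
      list_smul_pow_prod (A i0) (List.finRange k)
        (fun i => if i = i0 then Complex.I else ((-1 : ℂ)) ^ (γ i))
        (fun i => if i = i0 then 1 else 0),
      ← List.ofFn_eq_map, ← List.ofFn_eq_map]
  have hsum : (List.ofFn fun i : Fin k => if i = i0 then 1 else 0).sum = 1 := by
    rw [List.sum_ofFn]
    simp [Finset.sum_ite_eq']
  set α : ℂ := (List.ofFn fun i => if i = i0 then Complex.I else ((-1 : ℂ)) ^ (γ i)).prod
    with hα
  have hUT' : U ^ T = α • A i0 := by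
    rw [hUT, hsum, pow_one]
  have habs : ‖α‖ = 1 := by
    rw [hα, List.prod_ofFn, norm_prod]
    refine Finset.prod_eq_one fun i _ => ?_
    by_cases hi : i = i0 <;> simp [hi, Complex.norm_I, norm_pow]
  refine ⟨⟨α, habs, hUT'⟩, ?_⟩
  intro h
  rw [hUT', Matrix.smul_apply, hA i0, smul_eq_mul]
  have hone : cayleyAdj (S i0) (s * h) h = 1 := by
    simp only [cayleyAdj, Matrix.of_apply]
    rw [if_pos]
    constructor
    · rw [mul_inv_cancel_right, ← SetLike.mem_coe, hS1]
      exact Set.mem_insert_of_mem _ rfl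
    · intro hc
      exact hs (mul_eq_right.mp hc)
  rw [hone, mul_one, habs]
end

section
/- Let G be a finite abelian group, let k be a positive natural number, and let S₁, …, S_k be subgroups of G with γ_i = |S_i|. Suppose S₁ = {id, s} for an element s ∈ G with s ≠ id and s·s = id. Let T be a positive natural number, set θ₁ = π/(2T) and θ_i = π·γ_i/T for i ≥ 2, let A_i be the Cayley adjacency matrix of Cay(G, S_i∖{id}) over ℂ, let H_i = (2/γ_i)·A_i + ((2 − γ_i)/γ_i)·I, and define U = ∏_{i=1}^k exp(i·θ_i·H_i). Then there exists β ∈ ℂ with |β| = 1 such that U^{2T} = β·I; that is, the staggered quantum walk is periodic with period 2T up to a global phase. -/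
open scoped Classical

open NormedSpace

lemma exp_idem_aux {A : Type*} [NormedRing A] [NormedAlgebra ℂ A] [CompleteSpace A]
    (P : A) (hP : P * P = P) (c : ℂ) :
    exp (c • P) = 1 + (Complex.exp c - 1) • P := by
  have hPn : ∀ n : ℕ, P ^ (n + 1) = P := by
    intro n
    induction n with
    | zero => simp
    | succ n ih => rw [pow_succ, ih, hP]
  have hscalar : Summable (fun n : ℕ => ((n.factorial : ℂ))⁻¹ * c ^ n) := by
    simpa [smul_eq_mul] using expSeries_summable' (𝕂 := ℂ) (𝔸 := ℂ) c
  have hgsum : ∑' n : ℕ, ((n.factorial : ℂ))⁻¹ * c ^ n = Complex.exp c := by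
    rw [Complex.exp_eq_exp_ℂ, exp_eq_tsum ℂ]
    simp [smul_eq_mul]
  have key : (fun n : ℕ => ((n.factorial : ℂ))⁻¹ • (c • P) ^ n)
      = fun n => (((n.factorial : ℂ))⁻¹ * c ^ n) • P ^ n := by
    funext n; rw [smul_pow, smul_smul]
  have hsum : Summable fun n : ℕ => (((n.factorial : ℂ))⁻¹ * c ^ n) • P ^ n := by
    rw [← key]; exact expSeries_summable' (𝕂 := ℂ) (c • P)
  have e0 : exp (c • P) = ∑' n : ℕ, ((n.factorial : ℂ))⁻¹ • (c • P) ^ n := by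
    rw [exp_eq_tsum ℂ]
  rw [e0, key, Summable.tsum_eq_zero_add hsum]
  have h1 : (fun n : ℕ => ((((n+1).factorial : ℂ))⁻¹ * c ^ (n+1)) • P ^ (n + 1))
      = fun n => ((((n+1).factorial : ℂ))⁻¹ * c ^ (n+1)) • P := by
    funext n; rw [hPn]
  have hs2 : Summable (fun n : ℕ => (((n+1).factorial : ℂ))⁻¹ * c ^ (n+1)) :=
    hscalar.comp_injective (add_left_injective 1)
  rw [h1, Summable.tsum_smul_const hs2]
  have h2 : ∑' n : ℕ, (((n+1).factorial : ℂ))⁻¹ * c ^ (n+1) = Complex.exp c - 1 := by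
    have h3 := Summable.tsum_eq_zero_add hscalar
    rw [hgsum] at h3
    simp only [Nat.factorial_zero, Nat.cast_one, inv_one, pow_zero, mul_one] at h3
    rw [h3]; ring
  rw [h2]
  simp

lemma exp_invol_aux {A : Type*} [NormedRing A] [NormedAlgebra ℂ A] [CompleteSpace A]
    (M : A) (hM : M * M = 1) (z : ℂ) (hz : Complex.exp (-(2 * z)) = 1) :
    exp (z • M) = Complex.exp z • 1 := by
  set P : A := (2⁻¹ : ℂ) • (1 - M) with hPdef
  have hsq : (1 - M) * (1 - M) = (2 : ℂ) • (1 - M) := by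
    calc (1 - M) * (1 - M) = 1 - M - M + M * M := by noncomm_ring
      _ = (2 : ℂ) • (1 - M) := by rw [hM, smul_sub, two_smul, two_smul]; abel
  have hP : P * P = P := by
    rw [hPdef, smul_mul_smul_comm, hsq, smul_smul]
    norm_num
  have hsplit : z • M = z • (1 : A) + (-(2 * z)) • P := by
    rw [hPdef, smul_smul]
    have h4 : -(2 * z) * 2⁻¹ = -z := by ring
    rw [h4, neg_smul, smul_sub]
    abel
  have hcomm : Commute (z • (1 : A)) ((-(2 * z)) • P) :=
    ((Commute.one_left _).smul_left z).smul_right _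
  rw [hsplit, exp_add_of_commute_of_mem_ball (𝕂 := ℂ) hcomm
    ((expSeries_radius_eq_top ℂ A).symm ▸ edist_lt_top _ _)
    ((expSeries_radius_eq_top ℂ A).symm ▸ edist_lt_top _ _), exp_idem_aux P hP, exp_idem_aux (1 : A) (one_mul 1), hz]
  simp [sub_smul]

lemma matrix_exp_invol {n : Type*} [Fintype n] [DecidableEq n]
    (M : Matrix n n ℂ) (hM : M * M = 1) (z : ℂ) (hz : Complex.exp (-(2 * z)) = 1) :
    exp (z • M) = Complex.exp z • 1 := by
  letI : SeminormedRing (Matrix n n ℂ) := Matrix.linftyOpSemiNormedRing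
  letI : NormedRing (Matrix n n ℂ) := Matrix.linftyOpNormedRing
  letI : NormedAlgebra ℂ (Matrix n n ℂ) := Matrix.linftyOpNormedAlgebra
  exact exp_invol_aux M hM z hz

lemma list_prod_pow_aux {M : Type*} [Monoid M] :
    ∀ (l : List M), (∀ x ∈ l, ∀ y ∈ l, Commute x y) → ∀ n : ℕ,
      l.prod ^ n = (l.map (· ^ n)).prod
  | [], _, n => by simp
  | a :: l, h, n => by
      have ha : Commute a l.prod :=
        Commute.list_prod_right _ _ (fun y hy => h a (by simp) y (by simp [hy]))
      rw [List.prod_cons, List.map_cons, List.prod_cons, ha.mul_pow,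
        list_prod_pow_aux l (fun x hx y hy => h x (by simp [hx]) y (by simp [hy])) n]

lemma map_smul_one_prod_aux {A : Type*} [Ring A] [Algebra ℂ A] :
    ∀ l : List ℂ, (l.map (fun c => c • (1 : A))).prod = l.prod • 1
  | [] => by simp
  | c :: l => by
      rw [List.map_cons, List.prod_cons, List.prod_cons, map_smul_one_prod_aux l,
        smul_mul_smul_comm, one_mul]

noncomputable def Bmat {G : Type*} [Group G] (S : Subgroup G) : Matrix G G ℂ :=
  Matrix.of fun g h => if g * h⁻¹ ∈ S then (1 : ℂ) else 0

lemma cayleyAdj_eq_Bmat_sub_one {G : Type*} [Group G] [Fintype G] (S : Subgroup G) :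
    cayleyAdj S = Bmat S - 1 := by
  ext g h
  by_cases hgh : g = h
  · subst hgh
    simp [cayleyAdj, Bmat, Matrix.sub_apply, Matrix.one_apply, one_mem]
  · simp [cayleyAdj, Bmat, Matrix.sub_apply, Matrix.one_apply, hgh]

lemma Bmat_sq {G : Type*} [Group G] [Fintype G] (S : Subgroup G) :
    Bmat S * Bmat S = (Nat.card S : ℂ) • Bmat S := by
  ext g h
  rw [Matrix.mul_apply, Matrix.smul_apply]
  by_cases hgh : g * h⁻¹ ∈ S
  · have hterm : ∀ x : G, Bmat S g x * Bmat S x h = Bmat S g x := by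
      intro x
      by_cases hx : g * x⁻¹ ∈ S
      · have hxh : x * h⁻¹ ∈ S := by
          have h5 := S.mul_mem (S.inv_mem hx) hgh
          have h6 : (g * x⁻¹)⁻¹ * (g * h⁻¹) = x * h⁻¹ := by group
          rwa [h6] at h5
        simp [Bmat, hx, hxh]
      · simp [Bmat, hx]
    rw [Finset.sum_congr rfl (fun x _ => hterm x)]
    have hsum1 : ∑ x : G, Bmat S g x = (Nat.card S : ℂ) := by
      rw [← Equiv.sum_comp ((Equiv.inv G).trans (Equiv.mulRight g)) (fun x => Bmat S g x)]
      have hy : ∀ y : G, Bmat S g (((Equiv.inv G).trans (Equiv.mulRight g)) y)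
          = if y ∈ S then (1 : ℂ) else 0 := by
        intro y
        have h7 : g * (y⁻¹ * g)⁻¹ = y := by group
        show (if g * (y⁻¹ * g)⁻¹ ∈ S then (1 : ℂ) else 0) = _
        rw [h7]
      rw [Finset.sum_congr rfl (fun y _ => hy y)]
      rw [Finset.sum_boole]
      rw [Nat.card_eq_fintype_card, Fintype.card_subtype]
    rw [hsum1]
    simp [Bmat, hgh]
  · have hterm : ∀ x : G, Bmat S g x * Bmat S x h = 0 := by
      intro x
      by_cases hx : g * x⁻¹ ∈ S
      · have hxh : x * h⁻¹ ∉ S := by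
          intro hmem
          apply hgh
          have h6 : (g * x⁻¹) * (x * h⁻¹) = g * h⁻¹ := by group
          have := S.mul_mem hx hmem
          rwa [h6] at this
        simp [Bmat, hxh]
      · simp [Bmat, hx]
    rw [Finset.sum_congr rfl (fun x _ => hterm x)]
    simp [Bmat, hgh]

lemma Bmat_comm {G : Type*} [CommGroup G] [Fintype G] (S T : Subgroup G) :
    Bmat S * Bmat T = Bmat T * Bmat S := by
  ext g h
  rw [Matrix.mul_apply, Matrix.mul_apply]
  refine Fintype.sum_equiv ((Equiv.inv G).trans (Equiv.mulLeft (g * h))) _ _ ?_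
  intro x
  have e1 : g * (g * h * x⁻¹)⁻¹ = x * h⁻¹ := by
    have h8 : (g * h * x⁻¹)⁻¹ = (x * h⁻¹) * g⁻¹ := by group
    rw [h8, mul_comm (x * h⁻¹) g⁻¹, mul_inv_cancel_left]
  have e2 : (g * h * x⁻¹) * h⁻¹ = g * x⁻¹ := by
    have h9 : (g * h * x⁻¹) * h⁻¹ = g * ((h * x⁻¹) * h⁻¹) := by group
    rw [h9, mul_comm (h * x⁻¹) h⁻¹, inv_mul_cancel_left]
  show Bmat S g x * Bmat T x h
      = Bmat T g (g * h * x⁻¹) * Bmat S (g * h * x⁻¹) h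
  show (if g * x⁻¹ ∈ S then (1:ℂ) else 0) * (if x * h⁻¹ ∈ T then (1:ℂ) else 0)
      = (if g * (g * h * x⁻¹)⁻¹ ∈ T then (1:ℂ) else 0)
        * (if (g * h * x⁻¹) * h⁻¹ ∈ S then (1:ℂ) else 0)
  rw [e1, e2]
  ring

theorem staggered_cayley_periodicity
    {G : Type*} [CommGroup G] [Fintype G]
    (k : ℕ) (hk : 0 < k) (S : Fin k → Subgroup G)
    (γ : Fin k → ℕ) (hγ : ∀ i, γ i = Nat.card (S i))
    (s : G) (hs : s ≠ 1) (hs2 : s * s = 1)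
    (hS1 : (S ⟨0, hk⟩ : Set G) = {1, s})
    (T : ℕ) (hT : 0 < T)
    (θ : Fin k → ℝ)
    (hθ0 : θ ⟨0, hk⟩ = Real.pi / (2 * T))
    (hθ : ∀ i : Fin k, i ≠ ⟨0, hk⟩ → θ i = Real.pi * (γ i : ℝ) / T)
    (A : Fin k → Matrix G G ℂ) (hA : ∀ i, A i = cayleyAdj (S i))
    (H : Fin k → Matrix G G ℂ)
    (hH : ∀ i, H i = ((2 : ℂ) / (γ i : ℂ)) • A i
        + (((2 : ℂ) - (γ i : ℂ)) / (γ i : ℂ)) • (1 : Matrix G G ℂ))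
    (U : Matrix G G ℂ)
    (hU : U = (List.ofFn fun i => NormedSpace.exp ((Complex.I * (θ i : ℂ)) • H i)).prod) :
    ∃ β : ℂ, ‖β‖ = 1 ∧ U ^ (2 * T) = β • (1 : Matrix G G ℂ) := by
  classical
  have hγpos : ∀ i, 0 < γ i := fun i => by rw [hγ]; exact Nat.card_pos
  have hγne : ∀ i, (γ i : ℂ) ≠ 0 := fun i => Nat.cast_ne_zero.2 (hγpos i).ne'
  have hT2 : ((T : ℕ) : ℂ) ≠ 0 := Nat.cast_ne_zero.2 hT.ne'
  -- H i in terms of Bmat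
  have hHB : ∀ i, H i = ((2 : ℂ) / (γ i : ℂ)) • Bmat (S i) - 1 := by
    intro i
    rw [hH, hA, cayleyAdj_eq_Bmat_sub_one, smul_sub]
    have hc : ((2:ℂ) - (γ i : ℂ)) / (γ i : ℂ) = (2:ℂ)/(γ i : ℂ) - 1 := by
      field_simp [hγne i]
    rw [hc, sub_smul, one_smul]
    abel
  have hBsq : ∀ i, Bmat (S i) * Bmat (S i) = ((γ i : ℂ)) • Bmat (S i) := by
    intro i; rw [hγ]; exact Bmat_sq (S i)
  have hHsq : ∀ i, H i * H i = 1 := by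
    intro i
    rw [hHB i]
    set X : Matrix G G ℂ := ((2:ℂ)/(γ i : ℂ)) • Bmat (S i) with hX
    have hprod : X * X = X + X := by
      rw [hX, smul_mul_smul_comm, hBsq i, smul_smul, ← add_smul]
      congr 1
      field_simp [hγne i]
      ring
    calc (X - 1) * (X - 1) = X * X - X - X + 1 := by noncomm_ring
      _ = 1 := by rw [hprod]; abel
  have hHcomm : ∀ i j, Commute (H i) (H j) := by
    intro i j
    rw [hHB i, hHB j]
    have hB : Commute (Bmat (S i)) (Bmat (S j)) := Bmat_comm _ _
    exact (((hB.smul_left _).smul_right _).sub_right (Commute.one_right _)).sub_left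
      (Commute.one_left _)
  -- termwise computation
  have hterm : ∀ i : Fin k,
      (NormedSpace.exp ((Complex.I * (θ i : ℂ)) • H i)) ^ (2 * T)
        = (if i = (⟨0, hk⟩ : Fin k) then (-1 : ℂ) else 1) • (1 : Matrix G G ℂ) := by
    intro i
    rw [← Matrix.exp_nsmul]
    have hns : (2 * T) • ((Complex.I * (θ i : ℂ)) • H i)
        = (Complex.I * (((2 * T : ℕ) : ℂ) * (θ i : ℂ))) • H i := by
      rw [← Nat.cast_smul_eq_nsmul ℂ, smul_smul]
      congr 1
      ring
    rw [hns]
    by_cases hi : i = (⟨0, hk⟩ : Fin k)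
    · rw [if_pos hi, hi, hθ0]
      have hz1 : Complex.I * (((2 * T : ℕ) : ℂ) * ((Real.pi / (2 * (T : ℝ)) : ℝ) : ℂ))
          = Complex.I * (Real.pi : ℂ) := by
        congr 1
        push_cast
        field_simp [hT2]
      rw [hz1]
      have hzneg : Complex.exp (-(2 * (Complex.I * (Real.pi : ℂ)))) = 1 := by
        have h10 : -(2 * (Complex.I * (Real.pi : ℂ)))
            = ((-1 : ℤ) : ℂ) * (2 * (Real.pi : ℂ) * Complex.I) := by push_cast; ring
        rw [h10, Complex.exp_int_mul_two_pi_mul_I]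
      rw [matrix_exp_invol _ (hHsq _) _ hzneg, mul_comm Complex.I, Complex.exp_pi_mul_I]
    · rw [if_neg hi, hθ i hi]
      have hz2 : Complex.I * (((2 * T : ℕ) : ℂ) * ((Real.pi * (γ i : ℝ) / (T : ℝ) : ℝ) : ℂ))
          = (((γ i : ℕ) : ℤ) : ℂ) * (2 * (Real.pi : ℂ) * Complex.I) := by
        push_cast
        field_simp [hT2]
      rw [hz2]
      have hzneg : Complex.exp (-(2 * ((((γ i : ℕ) : ℤ) : ℂ) * (2 * (Real.pi : ℂ) * Complex.I)))) = 1 := by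
        have h11 : -(2 * ((((γ i : ℕ) : ℤ) : ℂ) * (2 * (Real.pi : ℂ) * Complex.I)))
            = ((-2 * (γ i : ℕ) : ℤ) : ℂ) * (2 * (Real.pi : ℂ) * Complex.I) := by push_cast; ring
        rw [h11, Complex.exp_int_mul_two_pi_mul_I]
      rw [matrix_exp_invol _ (hHsq _) _ hzneg, Complex.exp_int_mul_two_pi_mul_I]
  -- commutation of the exponentials
  have hlistcomm : ∀ x ∈ (List.ofFn fun i => NormedSpace.exp ((Complex.I * (θ i : ℂ)) • H i)),
      ∀ y ∈ (List.ofFn fun i => NormedSpace.exp ((Complex.I * (θ i : ℂ)) • H i)),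
      Commute x y := by
    intro x hx y hy
    rw [List.mem_ofFn] at hx hy
    obtain ⟨i, rfl⟩ := hx
    obtain ⟨j, rfl⟩ := hy
    exact (((hHcomm i j).smul_left _).smul_right _).exp
  refine ⟨-1, by simp, ?_⟩
  rw [hU, list_prod_pow_aux _ hlistcomm (2 * T), List.map_ofFn]
  have hfn : ((· ^ (2 * T)) ∘ fun i => NormedSpace.exp ((Complex.I * (θ i : ℂ)) • H i))
      = fun i : Fin k => (if i = (⟨0, hk⟩ : Fin k) then (-1 : ℂ) else 1) • (1 : Matrix G G ℂ) := by
    funext i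
    exact hterm i
  rw [hfn]
  rw [show (fun i : Fin k => (if i = (⟨0, hk⟩ : Fin k) then (-1 : ℂ) else 1) • (1 : Matrix G G ℂ))
      = ((fun c : ℂ => c • (1 : Matrix G G ℂ))
        ∘ (fun i : Fin k => if i = (⟨0, hk⟩ : Fin k) then (-1 : ℂ) else 1)) from rfl,
    ← List.map_ofFn, map_smul_one_prod_aux, List.prod_ofFn]
  congr 1
  rw [Finset.prod_ite_eq' Finset.univ (⟨0, hk⟩ : Fin k) (fun _ => (-1 : ℂ))]
  simp
end

section
/- Let G be a finite group and let S, T be subgroups of G with S ∩ T = {id}. Let M, N be G×G complex matrices such that for all a, b ∈ G: M_{a,b} = 0 whenever a⁻¹·b ∉ S and |M_{a,b}| = 1/√|S| whenever a⁻¹·b ∈ S; and N_{a,b} = 0 whenever a⁻¹·b ∉ T and |N_{a,b}| = 1/√|T| whenever a⁻¹·b ∈ T. Then for all a, b ∈ G: (M·N)_{a,b} = 0 whenever a⁻¹·b ∉ S·T, and |(M·N)_{a,b}| = 1/(√|S|·√|T|) whenever a⁻¹·b ∈ S·T, where S·T = {s·t : s ∈ S, t ∈ T}. -/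
open scoped Pointwise

theorem flat_supported_matrices_product
    {G : Type*} [Group G] [Fintype G] (S T : Subgroup G)
    (hST : (S : Set G) ∩ (T : Set G) = {1})
    (M N : Matrix G G ℂ)
    (hM0 : ∀ a b : G, a⁻¹ * b ∉ S → M a b = 0)
    (hM1 : ∀ a b : G, a⁻¹ * b ∈ S → ‖M a b‖ = 1 / Real.sqrt (Nat.card S))
    (hN0 : ∀ a b : G, a⁻¹ * b ∉ T → N a b = 0)
    (hN1 : ∀ a b : G, a⁻¹ * b ∈ T → ‖N a b‖ = 1 / Real.sqrt (Nat.card T)) :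
    ∀ a b : G,
      (a⁻¹ * b ∉ (S : Set G) * (T : Set G) → (M * N) a b = 0) ∧
      (a⁻¹ * b ∈ (S : Set G) * (T : Set G) →
        ‖(M * N) a b‖ = 1 / (Real.sqrt (Nat.card S) * Real.sqrt (Nat.card T))) := by
  intro a b
  have hmul : (M * N) a b = ∑ c : G, M a c * N c b := by
    simp [Matrix.mul_apply]
  constructor
  · intro h
    rw [hmul]
    apply Finset.sum_eq_zero
    intro c _
    by_cases hs : a⁻¹ * c ∈ S
    · by_cases ht : c⁻¹ * b ∈ T
      · exact absurd ⟨a⁻¹ * c, hs, c⁻¹ * b, ht, by group⟩ h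
      · rw [hN0 c b ht, mul_zero]
    · rw [hM0 a c hs, zero_mul]
  · rintro ⟨s, hs, t, ht, hst⟩
    have hst' : s * t = a⁻¹ * b := hst
    have hb : b = a * (s * t) := by rw [hst']; group
    have hc0S : a⁻¹ * (a * s) ∈ S := by simpa using hs
    have hc0T : (a * s)⁻¹ * b ∈ T := by
      have : (a * s)⁻¹ * b = t := by rw [hb]; group
      rw [this]; exact ht
    have hsum : (M * N) a b = M a (a * s) * N (a * s) b := by
      rw [hmul]
      apply Finset.sum_eq_single (a * s)
      · intro c _ hc
        by_cases hcs : a⁻¹ * c ∈ S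
        · by_cases hct : c⁻¹ * b ∈ T
          · -- uniqueness
            exfalso
            have key : s⁻¹ * (a⁻¹ * c) ∈ (S : Set G) ∩ (T : Set G) := by
              constructor
              · exact S.mul_mem (S.inv_mem hs) hcs
              · have heq : s⁻¹ * (a⁻¹ * c) = t * (c⁻¹ * b)⁻¹ := by
                  rw [hb]; group
                rw [heq]
                exact T.mul_mem ht (T.inv_mem hct)
            rw [hST] at key
            have : a⁻¹ * c = s := by
              have h1 : s⁻¹ * (a⁻¹ * c) = 1 := key
              calc a⁻¹ * c = s * (s⁻¹ * (a⁻¹ * c)) := by group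
                _ = s := by rw [h1, mul_one]
            exact hc (by rw [← this]; group)
          · rw [hN0 c b hct, mul_zero]
        · rw [hM0 a c hcs, zero_mul]
      · intro h; exact absurd (Finset.mem_univ _) h
    rw [hsum, norm_mul, hM1 a (a * s) hc0S, hN1 (a * s) b hc0T]
    rw [div_mul_div_comm, one_mul]
end

section
/- Let n be a natural number with n ≥ 2, and let θ be a real number. Let J be the n×n all-ones complex matrix and define the Grover Hamiltonian H = (2/n)·J − I. Then every entry of the matrix exp(i·θ·H) (matrix exponential, i the imaginary unit) has absolute value 1/√n if and only if (sin θ)² = n/4. -/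
open Nat in
lemma exp_smul_of_sq_eq_one {A : Type*} [NormedRing A] [NormedAlgebra ℂ A]
    [CompleteSpace A] (x : A) (hx : x ^ 2 = 1) (θ : ℝ) :
    NormedSpace.exp ((Complex.I * (θ : ℂ)) • x)
      = Complex.cos θ • (1 : A) + (Complex.I * Complex.sin θ) • x := by
  set z : ℂ := Complex.I * (θ : ℂ) with hz
  set f : ℕ → A := fun m => ((m ! : ℂ))⁻¹ • (z • x) ^ m with hf
  have hcos : HasSum (fun k : ℕ => f (2 * k)) (Complex.cos θ • (1 : A)) := by
    have h1 := (Complex.hasSum_cos (θ : ℂ)).smul_const (1 : A)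
    convert h1 using 2 with k
    rw [hf]
    simp only
    rw [smul_pow, pow_mul x, hx, one_pow, smul_smul, hz, mul_pow, pow_mul Complex.I,
      Complex.I_sq]
    try congr 1
    try field_simp
    try ring
  have hsin : HasSum (fun k : ℕ => f (2 * k + 1)) ((Complex.I * Complex.sin θ) • x) := by
    have h1 := ((Complex.hasSum_sin (θ : ℂ)).mul_left Complex.I).smul_const x
    convert h1 using 2 with k
    rw [hf]
    simp only
    rw [smul_pow, pow_succ x, pow_mul x, hx, one_pow, one_mul, smul_smul, hz, mul_pow,
      pow_succ, pow_mul Complex.I, Complex.I_sq]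
    congr 1
    field_simp
  exact (NormedSpace.exp_series_hasSum_exp' (𝕂 := ℂ) (z • x)).unique (hcos.even_add_odd hsin)

theorem grover_exp_flat_iff
    (n : ℕ) (hn : 2 ≤ n) (θ : ℝ)
    (J : Matrix (Fin n) (Fin n) ℂ) (hJ : ∀ a b, J a b = 1)
    (H : Matrix (Fin n) (Fin n) ℂ)
    (hH : H = ((2 : ℂ) / (n : ℂ)) • J - 1) :
    (∀ a b, ‖(NormedSpace.exp ((Complex.I * (θ : ℂ)) • H)) a b‖
        = 1 / Real.sqrt n) ↔ (Real.sin θ) ^ 2 = (n : ℝ) / 4 := by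
  have hn0 : (n : ℂ) ≠ 0 := Nat.cast_ne_zero.2 (by omega)
  have hnR : (0 : ℝ) < n := Nat.cast_pos.2 (by omega)
  have hJJ : J * J = (n : ℂ) • J := by
    ext a b
    simp [Matrix.mul_apply, hJ, Matrix.smul_apply]
  have hH2 : H ^ 2 = 1 := by
    rw [hH, sq, sub_mul, mul_sub, mul_sub, mul_one, one_mul, Matrix.smul_mul,
      Matrix.mul_smul, hJJ, smul_smul, smul_smul]
    have hc : (2 / (n : ℂ)) * (2 / (n : ℂ)) * (n : ℂ)
        = (2 / (n : ℂ)) + (2 / (n : ℂ)) := by field_simp; ring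
    rw [one_mul, hc, add_smul]
    abel
  letI : SeminormedRing (Matrix (Fin n) (Fin n) ℂ) := Matrix.linftyOpSemiNormedRing
  letI : NormedRing (Matrix (Fin n) (Fin n) ℂ) := Matrix.linftyOpNormedRing
  letI : NormedAlgebra ℂ (Matrix (Fin n) (Fin n) ℂ) := Matrix.linftyOpNormedAlgebra
  have hE := exp_smul_of_sq_eq_one H hH2 θ
  have hentry : ∀ a b, (NormedSpace.exp ((Complex.I * (θ : ℂ)) • H)) a b
      = Complex.cos θ * (if a = b then 1 else 0)
        + (Complex.I * Complex.sin θ) * ((2 : ℂ) / n - if a = b then 1 else 0) := by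
    intro a b
    rw [show NormedSpace.exp ((Complex.I * (θ : ℂ)) • H) = Complex.cos θ • (1 : Matrix (Fin n) (Fin n) ℂ) + (Complex.I * Complex.sin θ) • H from hE]
    simp only [Matrix.add_apply, Matrix.smul_apply, Matrix.sub_apply, Matrix.one_apply,
      hH, hJ, smul_eq_mul, mul_one]
  have habs_sin : ‖Complex.sin (θ : ℂ)‖ = |Real.sin θ| := by
    rw [← Complex.ofReal_sin, Complex.norm_real, Real.norm_eq_abs]
  have h2n : ‖(2 : ℂ) / n‖ = 2 / n := by
    rw [norm_div, Complex.norm_two, Complex.norm_natCast]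
  constructor
  · intro hflat
    have hab : (⟨0, by omega⟩ : Fin n) ≠ ⟨1, by omega⟩ := by
      simp [Fin.ext_iff]
    have hthis := hflat ⟨0, by omega⟩ ⟨1, by omega⟩
    rw [hentry] at hthis
    simp only [if_neg hab, mul_zero, zero_add, sub_zero] at hthis
    rw [norm_mul, norm_mul, Complex.norm_I, one_mul, habs_sin, h2n] at hthis
    have hsq : (Real.sin θ) ^ 2 * (2 / (n : ℝ)) ^ 2 = (1 / Real.sqrt n) ^ 2 := by
      rw [← sq_abs, ← mul_pow, hthis]
    have h1 : ((1 : ℝ) / Real.sqrt n) ^ 2 = 1 / n := by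
      rw [div_pow, one_pow, Real.sq_sqrt hnR.le]
    rw [h1] at hsq
    have hne : (n : ℝ) ≠ 0 := ne_of_gt hnR
    field_simp at hsq ⊢
    nlinarith [hsq]
  · intro hs a b
    rw [hentry]
    by_cases hab : a = b
    · simp only [if_pos hab, mul_one]
      have hv : Complex.cos (θ : ℂ)
            + Complex.I * Complex.sin (θ : ℂ) * ((2 : ℂ) / n - 1)
          = ((Real.cos θ : ℝ) : ℂ)
            + ((Real.sin θ * (2 / (n : ℝ) - 1) : ℝ) : ℂ) * Complex.I := by
        rw [← Complex.ofReal_cos, ← Complex.ofReal_sin]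
        push_cast
        ring
      rw [hv, Complex.norm_add_mul_I]
      have hc : Real.cos θ ^ 2 = 1 - Real.sin θ ^ 2 := by
        have := Real.sin_sq_add_cos_sq θ; linarith
      have hinner : Real.cos θ ^ 2 + (Real.sin θ * (2 / (n : ℝ) - 1)) ^ 2
          = 1 / (n : ℝ) := by
        have hne : (n : ℝ) ≠ 0 := ne_of_gt hnR
        rw [mul_pow, hc, hs]
        field_simp
        ring
      rw [hinner, one_div, Real.sqrt_inv, one_div]
    · simp only [if_neg hab, mul_zero, zero_add, sub_zero]
      rw [norm_mul, norm_mul, Complex.norm_I, one_mul, habs_sin, h2n]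
      have hsin : |Real.sin θ| = Real.sqrt n / 2 := by
        rw [← Real.sqrt_sq_eq_abs, hs]
        have h4 : ((n : ℝ) / 4) = (Real.sqrt n / 2) ^ 2 := by
          rw [div_pow, Real.sq_sqrt hnR.le]; norm_num
        rw [h4, Real.sqrt_sq (by positivity)]
      rw [hsin]
      have hs0 : (0 : ℝ) < Real.sqrt n := Real.sqrt_pos.2 hnR
      have hne : (n : ℝ) ≠ 0 := ne_of_gt hnR
      field_simp
      exact Real.sq_sqrt hnR.le
end

section
/- Let G be a finite abelian group, let k be a positive natural number, and let S₁, …, S_k be subgroups of G with γ_i = |S_i| satisfying 2 ≤ γ_i ≤ 4 for all i. Suppose the multiplication map S₁ × ⋯ × S_k → G sending (s₁, …, s_k) to s₁·⋯·s_k is bijective. Let T be a positive natural number and for each i set θ_i = π/(4T) if γ_i = 2, θ_i = π/(3T) if γ_i = 3, and θ_i = π/(2T) if γ_i = 4. For each i let A_i be the Cayley adjacency matrix of Cay(G, S_i∖{id}) over ℂ, let H_i = (2/γ_i)·A_i + ((2 − γ_i)/γ_i)·I, and define U = ∏_{i=1}^k exp(i·θ_i·H_i) (matrix exponential, i the imaginary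 unit). Then every entry of U^T has absolute value 1/√|G|; that is, the staggered quantum walk admits instantaneous uniform mixing at time T. -/
open scoped Classical

set_option maxHeartbeats 1000000
set_option linter.unusedSectionVars false

section ExpHelpers

open NormedSpace

/-- exponential of a scalar multiple of an idempotent in a Banach algebra -/
lemma exp_smul_idem_aux {𝔸 : Type*} [NormedRing 𝔸] [NormedAlgebra ℂ 𝔸] [CompleteSpace 𝔸]
    (P : 𝔸) (hP : P * P = P) (c : ℂ) :
    exp (c • P) = 1 + (Complex.exp c - 1) • P := by
  have hpow : ∀ n : ℕ, (c • P) ^ (n + 1) = (c ^ (n + 1)) • P := by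
    intro n
    induction n with
    | zero => simp
    | succ n ih =>
      rw [pow_succ, ih, smul_mul_smul_comm, hP, ← pow_succ]
  have hs : Summable (fun n : ℕ => ((n.factorial : ℂ))⁻¹ • (c • P) ^ n) :=
    expSeries_summable' (c • P)
  have hsc : Summable (fun n : ℕ => ((n.factorial : ℂ))⁻¹ • c ^ n) :=
    expSeries_summable' (𝕂 := ℂ) c
  have hsc' : Summable (fun n : ℕ => (((n + 1).factorial : ℂ))⁻¹ • c ^ (n + 1)) :=
    (summable_nat_add_iff 1).mpr hsc
  have hexpc : Complex.exp c = 1 + ∑' n : ℕ, (((n + 1).factorial : ℂ))⁻¹ • c ^ (n + 1) := by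
    rw [Complex.exp_eq_exp_ℂ]
    simp only [exp_eq_tsum (𝕂 := ℂ)]
    rw [hsc.tsum_eq_zero_add]
    simp
  simp only [exp_eq_tsum (𝕂 := ℂ)]
  rw [hs.tsum_eq_zero_add]
  simp only [pow_zero, Nat.factorial_zero, Nat.cast_one, inv_one, one_smul]
  congr 1
  calc ∑' n : ℕ, ((((n + 1).factorial : ℂ))⁻¹ • (c • P) ^ (n + 1))
      = ∑' n : ℕ, ((((n + 1).factorial : ℂ))⁻¹ • c ^ (n + 1)) • P := by
        simp only [hpow, smul_smul, smul_eq_mul]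
    _ = (∑' n : ℕ, (((n + 1).factorial : ℂ))⁻¹ • c ^ (n + 1)) • P :=
        hsc'.tsum_smul_const P
    _ = (Complex.exp c - 1) • P := by rw [hexpc, add_sub_cancel_left]

/-- exponential of a scalar multiple of an idempotent matrix -/
lemma Matrix.exp_smul_idem {m : Type*} [Fintype m] [DecidableEq m]
    (P : Matrix m m ℂ) (hP : P * P = P) (c : ℂ) :
    exp (c • P) = 1 + (Complex.exp c - 1) • P := by
  letI : SeminormedRing (Matrix m m ℂ) := Matrix.linftyOpSemiNormedRing
  letI : NormedRing (Matrix m m ℂ) := Matrix.linftyOpNormedRing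
  letI : NormedAlgebra ℂ (Matrix m m ℂ) := Matrix.linftyOpNormedAlgebra
  exact exp_smul_idem_aux P hP c

lemma Matrix.exp_smul_one' {m : Type*} [Fintype m] [DecidableEq m] (c : ℂ) :
    exp (c • (1 : Matrix m m ℂ)) = Complex.exp c • (1 : Matrix m m ℂ) := by
  letI : SeminormedRing (Matrix m m ℂ) := Matrix.linftyOpSemiNormedRing
  letI : NormedRing (Matrix m m ℂ) := Matrix.linftyOpNormedRing
  letI : NormedAlgebra ℂ (Matrix m m ℂ) := Matrix.linftyOpNormedAlgebra
  rw [Matrix.exp_smul_idem 1 (mul_one 1) c, sub_smul, one_smul, add_sub_cancel]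

end ExpHelpers

section ListHelpers

lemma list_ofFn_prod_pow {M : Type*} [Monoid M] :
    ∀ {k : ℕ} (f : Fin k → M), (∀ i j, Commute (f i) (f j)) → ∀ T : ℕ,
      (List.ofFn f).prod ^ T = (List.ofFn fun i => f i ^ T).prod := by
  intro k
  induction k with
  | zero => intro f _ T; simp
  | succ k ih =>
    intro f hf T
    rw [List.ofFn_succ, List.prod_cons, List.ofFn_succ (f := fun i => f i ^ T), List.prod_cons]
    have hc : Commute (f 0) ((List.ofFn fun i => f i.succ).prod) := by
      refine Commute.list_prod_right _ _ (fun x hx => ?_)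
      rw [List.mem_ofFn] at hx
      obtain ⟨i, rfl⟩ := hx
      exact hf 0 i.succ
    rw [hc.mul_pow, ih (fun i => f i.succ) (fun i j => hf i.succ j.succ) T]

lemma sqrt_prod' {ι : Type*} (s : Finset ι) (f : ι → ℕ) :
    Real.sqrt (∏ i ∈ s, (f i : ℝ)) = ∏ i ∈ s, Real.sqrt (f i) := by
  induction s using Finset.cons_induction with
  | empty => simp
  | cons a s ha ih =>
    rw [Finset.prod_cons, Finset.prod_cons, Real.sqrt_mul (by positivity), ih]

end ListHelpers

section Circulant

variable {G : Type*} [CommGroup G] [Fintype G]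

/-- The "group circulant" matrix associated to `f : G → ℂ`. -/
noncomputable def Tmat (f : G → ℂ) : Matrix G G ℂ := Matrix.of fun g h => f (g * h⁻¹)

lemma Tmat_apply (f : G → ℂ) (g h : G) : Tmat f g h = f (g * h⁻¹) := rfl

/-- convolution on `G → ℂ` -/
noncomputable def convG (f g : G → ℂ) : G → ℂ := fun x => ∑ p : G, f p * g (p⁻¹ * x)

lemma Tmat_mul (f g : G → ℂ) : Tmat f * Tmat g = Tmat (convG f g) := by
  ext a b
  rw [Matrix.mul_apply, Tmat_apply, convG]
  refine Fintype.sum_equiv ((Equiv.inv G).trans (Equiv.mulLeft a)) _ _ (fun m => ?_)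
  simp only [Equiv.trans_apply, Equiv.inv_apply, Equiv.coe_mulLeft, Tmat_apply]
  congr 1
  rw [mul_inv_rev, inv_inv]
  group

lemma convG_comm (f g : G → ℂ) : convG f g = convG g f := by
  funext x
  refine Fintype.sum_equiv ((Equiv.inv G).trans (Equiv.mulRight x)) _ _ (fun p => ?_)
  simp only [Equiv.trans_apply, Equiv.inv_apply, Equiv.coe_mulRight]
  rw [mul_comm]
  congr 2
  rw [mul_inv_rev, inv_inv, mul_assoc, mul_comm p x, inv_mul_cancel_left]

lemma Tmat_commute (f g : G → ℂ) : Commute (Tmat f) (Tmat g) := by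
  unfold Commute SemiconjBy
  rw [Tmat_mul, Tmat_mul, convG_comm]

lemma Tmat_one : Tmat (fun x : G => if x = 1 then (1 : ℂ) else 0) = 1 := by
  ext a b
  rw [Tmat_apply, Matrix.one_apply]
  simp [mul_inv_eq_one]

lemma Tmat_smul (c : ℂ) (f : G → ℂ) : Tmat (fun x => c * f x) = c • Tmat f := by
  ext a b; simp [Tmat_apply, Matrix.smul_apply]

lemma Tmat_add (f g : G → ℂ) : Tmat (fun x => f x + g x) = Tmat f + Tmat g := by
  ext a b; simp [Tmat_apply, Matrix.add_apply]

/-- indicator of a subgroup -/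
noncomputable def indG (S : Subgroup G) : G → ℂ := fun x => if x ∈ S then 1 else 0

lemma convG_indG (S : Subgroup G) :
    convG (indG S) (indG S) = fun x => (Nat.card S : ℂ) * indG S x := by
  funext x
  unfold convG indG
  by_cases hx : x ∈ S
  · have hcond : ∀ p : G, (p ∈ S ∧ p⁻¹ * x ∈ S) ↔ p ∈ S := fun p =>
      ⟨fun h => h.1, fun hp => ⟨hp, S.mul_mem (S.inv_mem hp) hx⟩⟩
    simp only [ite_mul, one_mul, zero_mul, ← ite_and, hcond, hx, if_true, mul_one]
    rw [Finset.sum_boole]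
    simp [Nat.card_eq_fintype_card, Fintype.card_subtype]
  · have hcond : ∀ p : G, ¬(p ∈ S ∧ p⁻¹ * x ∈ S) := by
      rintro p ⟨hp, hpx⟩
      exact hx (by simpa using S.mul_mem hp hpx)
    simp only [ite_mul, one_mul, zero_mul, ← ite_and]
    rw [Finset.sum_eq_zero (fun p _ => by simp [hcond p]), if_neg hx, mul_zero]

lemma prod_Tmat : ∀ {k : ℕ} (f : Fin k → (G → ℂ)),
    (List.ofFn fun i => Tmat (f i)).prod
      = Tmat (fun x => ∑ y : Fin k → G,
          if (∏ i, y i) = x then ∏ i, f i (y i) else 0) := by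
  intro k
  induction k with
  | zero =>
    intro f
    simp only [List.ofFn_zero, List.prod_nil]
    rw [← Tmat_one]
    refine congrArg Tmat (funext fun x => ?_)
    rw [Fintype.sum_unique]
    simp [eq_comm]
  | succ k ih =>
    intro f
    rw [List.ofFn_succ, List.prod_cons,
      show (List.ofFn fun i : Fin k => Tmat (f i.succ)).prod = _ from ih (fun i => f i.succ),
      Tmat_mul]
    refine congrArg Tmat (funext fun x => ?_)
    unfold convG
    have key : ∀ p : G, (f 0 p * ∑ y : Fin k → G,
        if (∏ i, y i) = p⁻¹ * x then ∏ i, f i.succ (y i) else 0)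
        = ∑ y : Fin k → G, if p * ∏ i, y i = x then f 0 p * ∏ i, f i.succ (y i) else 0 := by
      intro p
      rw [Finset.mul_sum]
      refine Finset.sum_congr rfl (fun y _ => ?_)
      rw [mul_ite, mul_zero, eq_inv_mul_iff_mul_eq]
    simp only [key]
    refine ((Fintype.sum_prod_type (fun py : G × (Fin k → G) =>
      if py.1 * ∏ i, py.2 i = x then f 0 py.1 * ∏ i, f i.succ (py.2 i) else 0)).symm).trans ?_
    refine Fintype.sum_equiv (Fin.consEquiv fun _ : Fin (k+1) => G) _ _ (fun py => ?_)
    simp [Fin.prod_univ_succ, Fin.consEquiv]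

lemma cayleyAdj_add_one (S : Subgroup G) : cayleyAdj S + 1 = Tmat (indG S) := by
  ext a b
  simp only [Matrix.add_apply, cayleyAdj, Tmat, indG, Matrix.of_apply, Matrix.one_apply]
  by_cases hab : a = b
  · subst hab; simp [Subgroup.one_mem]
  · have : a * b⁻¹ ≠ 1 := by simpa [mul_inv_eq_one] using hab
    simp [hab, this]

lemma exp_I_smul_H (S : Subgroup G) (γ : ℕ) (hγ : γ = Nat.card S) (hγ0 : (γ : ℂ) ≠ 0)
    (H : Matrix G G ℂ)
    (hH : H = ((2 : ℂ) / (γ : ℂ)) • cayleyAdj S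
        + (((2 : ℂ) - (γ : ℂ)) / (γ : ℂ)) • (1 : Matrix G G ℂ))
    (β : ℝ) :
    NormedSpace.exp ((Complex.I * (β : ℂ)) • H)
      = Tmat (fun x => Complex.exp (-(Complex.I * β)) * (if x = 1 then 1 else 0)
          + (Complex.exp (Complex.I * β) - Complex.exp (-(Complex.I * β))) * (γ : ℂ)⁻¹
            * indG S x) := by
  set N : Matrix G G ℂ := Tmat (indG S) with hNdef
  have hNN : N * N = (γ : ℂ) • N := by
    rw [hNdef, Tmat_mul, convG_indG, hγ, Tmat_smul]
  set P : Matrix G G ℂ := (γ : ℂ)⁻¹ • N with hPdef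
  have hPP : P * P = P := by
    rw [hPdef, Matrix.smul_mul, Matrix.mul_smul, hNN, smul_smul, smul_smul]
    congr 1
    field_simp
  have hA : cayleyAdj S = N - 1 := by
    rw [hNdef, ← cayleyAdj_add_one S, add_sub_cancel_right]
  have hsplit : (Complex.I * (β : ℂ)) • H
      = (2 * (Complex.I * β)) • P + (-(Complex.I * β)) • (1 : Matrix G G ℂ) := by
    rw [hH, hA, hPdef]
    rw [smul_smul]
    match_scalars
    · field_simp
    · field_simp; ring
  rw [hsplit, Matrix.exp_add_of_commute _ _ (((Commute.one_right _).smul_right _)),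
    Matrix.exp_smul_idem P hPP, Matrix.exp_smul_one']
  have hee : Complex.exp (2 * (Complex.I * β)) * Complex.exp (-(Complex.I * β))
      = Complex.exp (Complex.I * β) := by
    rw [← Complex.exp_add]; ring_nf
  rw [add_mul, one_mul, Matrix.smul_mul, Matrix.mul_smul, mul_one, smul_smul, hPdef,
    smul_smul]
  rw [← Tmat_one (G := G)]
  rw [← Tmat_smul, ← Tmat_smul, ← Tmat_add]
  refine congrArg Tmat (funext fun x => ?_)
  have h2 : (Complex.exp (2 * (Complex.I * (β:ℂ))) - 1) * Complex.exp (-(Complex.I * (β:ℂ)))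
      = Complex.exp (Complex.I * (β:ℂ)) - Complex.exp (-(Complex.I * (β:ℂ))) := by
    rw [sub_mul, hee, one_mul]
  rw [h2]

end Circulant

section Scalar

lemma abs_val (γ : ℕ) (α : ℝ)
    (h : (γ = 2 ∧ α = Real.pi/4) ∨ (γ = 3 ∧ α = Real.pi/3) ∨ (γ = 4 ∧ α = Real.pi/2))
    (d : ℂ) (hd : d = 1 ∨ d = 0) :
    ‖Complex.exp (-(Complex.I * (α : ℂ))) * d
      + (Complex.exp (Complex.I * (α : ℂ)) - Complex.exp (-(Complex.I * (α : ℂ))))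
        * (γ : ℂ)⁻¹‖
      = (Real.sqrt γ)⁻¹ := by
  have hγ0 : (γ : ℝ) ≠ 0 := by rcases h with ⟨h, _⟩ | ⟨h, _⟩ | ⟨h, _⟩ <;> simp [h]
  have hγ0' : (γ : ℂ) ≠ 0 := by exact_mod_cast (Complex.ofReal_ne_zero.mpr hγ0)
  have e1 : Complex.exp (Complex.I * (α : ℂ))
      = (Real.cos α : ℂ) + (Real.sin α : ℂ) * Complex.I := by
    rw [mul_comm, Complex.exp_mul_I, Complex.ofReal_cos, Complex.ofReal_sin]
  have e2 : Complex.exp (-(Complex.I * (α : ℂ)))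
      = (Real.cos α : ℂ) - (Real.sin α : ℂ) * Complex.I := by
    rw [show -(Complex.I * (α : ℂ)) = ((-α : ℝ) : ℂ) * Complex.I by push_cast; ring,
      Complex.exp_mul_I, Complex.ofReal_neg, Complex.cos_neg, Complex.sin_neg,
      Complex.ofReal_cos, Complex.ofReal_sin]
    ring
  rcases hd with rfl | rfl
  · have hv : Complex.exp (-(Complex.I * (α : ℂ))) * 1
        + (Complex.exp (Complex.I * (α : ℂ)) - Complex.exp (-(Complex.I * (α : ℂ))))
          * (γ : ℂ)⁻¹
        = ((Real.cos α : ℝ) : ℂ) + ((Real.sin α * (2 - γ) / γ : ℝ) : ℂ) * Complex.I := by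
      rw [e1, e2, mul_one]
      push_cast
      field_simp
      ring
    rw [hv, Complex.norm_add_mul_I]
    rcases h with ⟨rfl, rfl⟩ | ⟨rfl, rfl⟩ | ⟨rfl, rfl⟩
    · rw [show Real.cos (Real.pi/4) ^ 2 + (Real.sin (Real.pi/4) * (2 - (2:ℕ)) / (2:ℕ)) ^ 2
          = (((2:ℕ) : ℝ))⁻¹ by
        rw [Real.cos_pi_div_four, Real.sin_pi_div_four]
        push_cast
        simp only [div_pow, mul_pow, Real.sq_sqrt (show (0:ℝ) ≤ 2 by norm_num)]
        norm_num]
      rw [Real.sqrt_inv]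
    · rw [show Real.cos (Real.pi/3) ^ 2 + (Real.sin (Real.pi/3) * (2 - (3:ℕ)) / (3:ℕ)) ^ 2
          = (((3:ℕ) : ℝ))⁻¹ by
        rw [Real.cos_pi_div_three, Real.sin_pi_div_three]
        push_cast
        simp only [div_pow, mul_pow, Real.sq_sqrt (show (0:ℝ) ≤ 3 by norm_num)]
        norm_num]
      rw [Real.sqrt_inv]
    · rw [show Real.cos (Real.pi/2) ^ 2 + (Real.sin (Real.pi/2) * (2 - (4:ℕ)) / (4:ℕ)) ^ 2
          = (((4:ℕ) : ℝ))⁻¹ by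
        rw [Real.cos_pi_div_two, Real.sin_pi_div_two]
        push_cast
        norm_num]
      rw [Real.sqrt_inv]
  · have hv : Complex.exp (-(Complex.I * (α : ℂ))) * 0
        + (Complex.exp (Complex.I * (α : ℂ)) - Complex.exp (-(Complex.I * (α : ℂ))))
          * (γ : ℂ)⁻¹
        = ((0 : ℝ) : ℂ) + ((2 * Real.sin α / γ : ℝ) : ℂ) * Complex.I := by
      rw [e1, e2, mul_zero, zero_add]
      push_cast
      field_simp
      ring
    rw [hv, Complex.norm_add_mul_I]
    rcases h with ⟨rfl, rfl⟩ | ⟨rfl, rfl⟩ | ⟨rfl, rfl⟩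
    · rw [show (0:ℝ) ^ 2 + (2 * Real.sin (Real.pi/4) / (2:ℕ)) ^ 2 = (((2:ℕ) : ℝ))⁻¹ by
        rw [Real.sin_pi_div_four]
        push_cast
        simp only [div_pow, mul_pow, Real.sq_sqrt (show (0:ℝ) ≤ 2 by norm_num)]
        norm_num]
      rw [Real.sqrt_inv]
    · rw [show (0:ℝ) ^ 2 + (2 * Real.sin (Real.pi/3) / (3:ℕ)) ^ 2 = (((3:ℕ) : ℝ))⁻¹ by
        rw [Real.sin_pi_div_three]
        push_cast
        simp only [div_pow, mul_pow, Real.sq_sqrt (show (0:ℝ) ≤ 3 by norm_num)]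
        norm_num]
      rw [Real.sqrt_inv]
    · rw [show (0:ℝ) ^ 2 + (2 * Real.sin (Real.pi/2) / (4:ℕ)) ^ 2 = (((4:ℕ) : ℝ))⁻¹ by
        rw [Real.sin_pi_div_two]
        push_cast
        norm_num]
      rw [Real.sqrt_inv]

end Scalar
theorem staggered_cayley_instantaneous_uniform_mixing
    {G : Type*} [CommGroup G] [Fintype G]
    (k : ℕ) (hk : 0 < k) (S : Fin k → Subgroup G)
    (γ : Fin k → ℕ) (hγ : ∀ i, γ i = Nat.card (S i))
    (hγ2 : ∀ i, 2 ≤ γ i) (hγ4 : ∀ i, γ i ≤ 4)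
    (hbij : Function.Bijective
      (fun x : (i : Fin k) → (S i : Subgroup G) => ∏ i, (x i : G)))
    (T : ℕ) (hT : 0 < T)
    (θ : Fin k → ℝ)
    (hθ2 : ∀ i, γ i = 2 → θ i = Real.pi / (4 * T))
    (hθ3 : ∀ i, γ i = 3 → θ i = Real.pi / (3 * T))
    (hθ4 : ∀ i, γ i = 4 → θ i = Real.pi / (2 * T))
    (A : Fin k → Matrix G G ℂ) (hA : ∀ i, A i = cayleyAdj (S i))
    (H : Fin k → Matrix G G ℂ)
    (hH : ∀ i, H i = ((2 : ℂ) / (γ i : ℂ)) • A i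
        + (((2 : ℂ) - (γ i : ℂ)) / (γ i : ℂ)) • (1 : Matrix G G ℂ))
    (U : Matrix G G ℂ)
    (hU : U = (List.ofFn fun i => NormedSpace.exp ((Complex.I * (θ i : ℂ)) • H i)).prod) :
    ∀ g h : G, ‖(U ^ T) g h‖ = 1 / Real.sqrt (Fintype.card G) := by
  intro g h
  have hT0 : (T : ℝ) ≠ 0 := Nat.cast_ne_zero.mpr hT.ne'
  have hγ0 : ∀ i, ((γ i : ℂ)) ≠ 0 := fun i =>
    Nat.cast_ne_zero.mpr (by have := hγ2 i; omega)
  -- the effective rotation angles at time T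
  set α : Fin k → ℝ := fun i => (T : ℝ) * θ i with hαdef
  have hαval : ∀ i, (γ i = 2 ∧ α i = Real.pi/4) ∨ (γ i = 3 ∧ α i = Real.pi/3)
      ∨ (γ i = 4 ∧ α i = Real.pi/2) := by
    intro i
    have h234 : γ i = 2 ∨ γ i = 3 ∨ γ i = 4 := by
      have := hγ2 i; have := hγ4 i; omega
    rcases h234 with hg | hg | hg
    · exact Or.inl ⟨hg, by rw [hαdef]; simp only; rw [hθ2 i hg]; field_simp⟩
    · exact Or.inr (Or.inl ⟨hg, by rw [hαdef]; simp only; rw [hθ3 i hg]; field_simp⟩)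
    · exact Or.inr (Or.inr ⟨hg, by rw [hαdef]; simp only; rw [hθ4 i hg]; field_simp⟩)
  -- the circulant symbols of the powered factors
  set fT : Fin k → G → ℂ := fun i x =>
    Complex.exp (-(Complex.I * (α i : ℂ))) * (if x = 1 then 1 else 0)
      + (Complex.exp (Complex.I * (α i : ℂ)) - Complex.exp (-(Complex.I * (α i : ℂ))))
        * (γ i : ℂ)⁻¹ * indG (S i) x with hfTdef
  have hHi : ∀ i, H i = ((2 : ℂ) / (γ i : ℂ)) • cayleyAdj (S i)
      + (((2 : ℂ) - (γ i : ℂ)) / (γ i : ℂ)) • (1 : Matrix G G ℂ) := by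
    intro i; rw [hH i, hA i]
  have hE : ∀ i (β : ℝ), NormedSpace.exp ((Complex.I * (β : ℂ)) • H i)
      = Tmat (fun x => Complex.exp (-(Complex.I * β)) * (if x = 1 then 1 else 0)
          + (Complex.exp (Complex.I * β) - Complex.exp (-(Complex.I * β))) * (γ i : ℂ)⁻¹
            * indG (S i) x) :=
    fun i β => exp_I_smul_H (S i) (γ i) (hγ i) (hγ0 i) (H i) (hHi i) β
  -- powers of the factors
  have hpow : ∀ i, (NormedSpace.exp ((Complex.I * (θ i : ℂ)) • H i)) ^ T
      = Tmat (fT i) := by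
    intro i
    rw [← Matrix.exp_nsmul T ((Complex.I * (θ i : ℂ)) • H i)]
    rw [show (T • ((Complex.I * (θ i : ℂ)) • H i))
        = (Complex.I * ((α i : ℝ) : ℂ)) • H i by
      rw [← Nat.cast_smul_eq_nsmul ℂ T, smul_smul, hαdef]
      congr 1
      push_cast
      ring]
    exact hE i (α i)
  -- U ^ T as a product of circulants
  have hUT : U ^ T = Tmat (fun x => ∑ y : Fin k → G,
      if (∏ i, y i) = x then ∏ i, fT i (y i) else 0) := by
    rw [hU, list_ofFn_prod_pow _ (fun i j => by
      rw [hE i (θ i), hE j (θ j)]; exact Tmat_commute _ _) T]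
    rw [show (List.ofFn fun i => (NormedSpace.exp ((Complex.I * (θ i : ℂ)) • H i)) ^ T)
        = (List.ofFn fun i => Tmat (fT i)) from by
      congr 1; funext i; exact hpow i]
    exact prod_Tmat fT
  -- evaluate the entry
  set x : G := g * h⁻¹ with hxdef
  obtain ⟨σ, hσ⟩ := hbij.surjective x
  have hentry : (U ^ T) g h = ∏ i, fT i ((σ i : G)) := by
    rw [hUT, Tmat_apply, ← hxdef]
    rw [Finset.sum_eq_single (fun i => ((σ i : G)))]
    · rw [if_pos hσ]
    · intro y _ hy
      by_cases hprod : (∏ i, y i) = x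
      · rw [if_pos hprod]
        by_cases hall : ∀ i, y i ∈ S i
        · exfalso
          apply hy
          have : (fun i => (⟨y i, hall i⟩ : (S i : Subgroup G))) = σ := by
            apply hbij.injective
            show (∏ i, y i) = ∏ i, ((σ i : G))
            exact hprod.trans hσ.symm
          funext i
          rw [← this]
        · push_neg at hall
          obtain ⟨i, hi⟩ := hall
          refine Finset.prod_eq_zero (Finset.mem_univ i) ?_
          have h1 : y i ≠ 1 := fun hy1 => hi (hy1 ▸ (S i).one_mem)
          rw [hfTdef]
          simp only [indG, if_neg hi, if_neg h1, mul_zero, mul_one, add_zero, mul_zero]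
      · rw [if_neg hprod]
    · intro hmem
      exact absurd (Finset.mem_univ _) hmem
  rw [hentry, Complex.norm_prod]
  have hfactor : ∀ i, ‖fT i ((σ i : G))‖ = (Real.sqrt (γ i))⁻¹ := by
    intro i
    have hmem : ((σ i : G)) ∈ S i := (σ i).2
    rw [hfTdef]
    simp only [indG, if_pos hmem, mul_one]
    exact abs_val (γ i) (α i) (hαval i) _ (by by_cases h1 : ((σ i : G)) = 1 <;> simp [h1])
  rw [Finset.prod_congr rfl (fun i _ => hfactor i)]
  rw [Finset.prod_inv_distrib, ← sqrt_prod' Finset.univ γ]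
  rw [show (∏ i, ((γ i : ℝ))) = ((Fintype.card G : ℕ) : ℝ) by
    rw [← Nat.cast_prod]
    congr 1
    calc ∏ i, γ i = ∏ i, Fintype.card (S i) := by
          refine Finset.prod_congr rfl (fun i _ => ?_)
          rw [hγ i, Nat.card_eq_fintype_card]
      _ = Fintype.card ((i : Fin k) → (S i : Subgroup G)) := Fintype.card_pi.symm
      _ = Fintype.card G := Fintype.card_of_bijective hbij]
  rw [one_div]
end
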